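/- Let X = X₁∂_{x₁} + X₂∂_{x₂} + X₃∂_{x₃} on {x₃>0} ⊂ ℝ³ with X₁ = (a₁/2)(x₁²−x₂²−x₃²) + a₂x₁x₂ + bx₁ + c₁, X₂ = (a₂/2)(x₂²−x₁²−x₃²) + a₁x₁x₂ + bx₂ + c₂, X₃ = x₃(a₁x₁+a₂x₂+b), and let ω = Σ(X_i/x₃²)dx_i. Then L_X ω = 0, i.e., d(ω(X)) + i_X(dω) = 0. -/

import Mathlib

set_option maxHeartbeats 4000000

lemma hpoly (p₄ p₃ p₂ p₁ p₀ x : ℝ) :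
    HasDerivAt (fun t => p₄*t^4 + p₃*t^3 + p₂*t^2 + p₁*t + p₀)
      (4*p₄*x^3 + 3*p₃*x^2 + 2*p₂*x + p₁) x := by
  have h := ((((hasDerivAt_pow 4 x).const_mul p₄).add
      ((hasDerivAt_pow 3 x).const_mul p₃)).add
      ((hasDerivAt_pow 2 x).const_mul p₂)).add
      (((hasDerivAt_id x).const_mul p₁).add_const p₀)
  refine HasDerivAt.congr_deriv (h.congr_of_eventuallyEq (Filter.Eventually.of_forall fun t => ?_)) ?_
  · simp only [Pi.add_apply, id_eq]; ring
  · norm_num; ring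



/-- Components of the soliton field `X` on `{x₃>0} ⊂ ℝ³`. -/
noncomputable def XX1 (a₁ a₂ b c₁ x₁ x₂ x₃ : ℝ) : ℝ :=
  a₁ / 2 * (x₁ ^ 2 - x₂ ^ 2 - x₃ ^ 2) + a₂ * x₁ * x₂ + b * x₁ + c₁
noncomputable def XX2 (a₁ a₂ b c₂ x₁ x₂ x₃ : ℝ) : ℝ :=
  a₂ / 2 * (x₂ ^ 2 - x₁ ^ 2 - x₃ ^ 2) + a₁ * x₁ * x₂ + b * x₂ + c₂
noncomputable def XX3 (a₁ a₂ b x₁ x₂ x₃ : ℝ) : ℝ := x₃ * (a₁ * x₁ + a₂ * x₂ + b)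

/-- Components of `ω = Σ (Xᵢ/x₃²)dxᵢ`. -/
noncomputable def ow1 (a₁ a₂ b c₁ x₁ x₂ x₃ : ℝ) : ℝ := XX1 a₁ a₂ b c₁ x₁ x₂ x₃ / x₃ ^ 2
noncomputable def ow2 (a₁ a₂ b c₂ x₁ x₂ x₃ : ℝ) : ℝ := XX2 a₁ a₂ b c₂ x₁ x₂ x₃ / x₃ ^ 2
noncomputable def ow3 (a₁ a₂ b x₁ x₂ x₃ : ℝ) : ℝ := XX3 a₁ a₂ b x₁ x₂ x₃ / x₃ ^ 2

/-- `i_X ω = ω(X) = (X₁² + X₂² + X₃²)/x₃²`. -/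
noncomputable def fC (a₁ a₂ b c₁ c₂ x₁ x₂ x₃ : ℝ) : ℝ :=
  (XX1 a₁ a₂ b c₁ x₁ x₂ x₃ ^ 2 + XX2 a₁ a₂ b c₂ x₁ x₂ x₃ ^ 2 +
    XX3 a₁ a₂ b x₁ x₂ x₃ ^ 2) / x₃ ^ 2

/-- Coefficients of `dω = A dx₁∧dx₂ + B dx₁∧dx₃ + C dx₂∧dx₃`. -/
noncomputable def Aco (a₁ a₂ b c₁ c₂ x₁ x₂ x₃ : ℝ) : ℝ :=
  deriv (fun s => ow2 a₁ a₂ b c₂ s x₂ x₃) x₁ - deriv (fun s => ow1 a₁ a₂ b c₁ x₁ s x₃) x₂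
noncomputable def Bco (a₁ a₂ b c₁ c₂ x₁ x₂ x₃ : ℝ) : ℝ :=
  deriv (fun s => ow3 a₁ a₂ b s x₂ x₃) x₁ - deriv (fun s => ow1 a₁ a₂ b c₁ x₁ x₂ s) x₃
noncomputable def Cco (a₁ a₂ b c₁ c₂ x₁ x₂ x₃ : ℝ) : ℝ :=
  deriv (fun s => ow3 a₁ a₂ b x₁ s x₃) x₂ - deriv (fun s => ow2 a₁ a₂ b c₂ x₁ x₂ s) x₃

/-- `L_X ω = d(ω(X)) + i_X(dω) = 0` on `{x₃>0}`: each of the three components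
vanishes, using `i_X(dω) = (−AX₂ − BX₃)dx₁ + (AX₁ − CX₃)dx₂ + (BX₁ + CX₂)dx₃`. -/
theorem stmt11 (a₁ a₂ b c₁ c₂ : ℝ) (x₁ x₂ x₃ : ℝ) (h : 0 < x₃) :
    deriv (fun s => fC a₁ a₂ b c₁ c₂ s x₂ x₃) x₁ +
      (-(Aco a₁ a₂ b c₁ c₂ x₁ x₂ x₃ * XX2 a₁ a₂ b c₂ x₁ x₂ x₃) -
        Bco a₁ a₂ b c₁ c₂ x₁ x₂ x₃ * XX3 a₁ a₂ b x₁ x₂ x₃) = 0 ∧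
    deriv (fun s => fC a₁ a₂ b c₁ c₂ x₁ s x₃) x₂ +
      (Aco a₁ a₂ b c₁ c₂ x₁ x₂ x₃ * XX1 a₁ a₂ b c₁ x₁ x₂ x₃ -
        Cco a₁ a₂ b c₁ c₂ x₁ x₂ x₃ * XX3 a₁ a₂ b x₁ x₂ x₃) = 0 ∧
    deriv (fun s => fC a₁ a₂ b c₁ c₂ x₁ x₂ s) x₃ +
      (Bco a₁ a₂ b c₁ c₂ x₁ x₂ x₃ * XX1 a₁ a₂ b c₁ x₁ x₂ x₃ +
        Cco a₁ a₂ b c₁ c₂ x₁ x₂ x₃ * XX2 a₁ a₂ b c₂ x₁ x₂ x₃) = 0 := by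
  have dfC1 : deriv (fun t => fC a₁ a₂ b c₁ c₂ t x₂ x₃) x₁ =
      (4*((1/4 : ℝ)*a₂^2 + (1/4 : ℝ)*a₁^2)*x₁^3 + 3*(1*a₁*b)*x₁^2 + 2*(1*b^2 + -1*a₂*c₂ + 1*a₂*b*x₂ + (1/2 : ℝ)*a₂^2*x₃^2 + (1/2 : ℝ)*a₂^2*x₂^2 + 1*a₁*c₁ + (1/2 : ℝ)*a₁^2*x₃^2 + (1/2 : ℝ)*a₁^2*x₂^2)*x₁ + (2*b*c₁ + 2*a₂*c₁*x₂ + 2*a₁*c₂*x₂ + 1*a₁*b*x₃^2 + 1*a₁*b*x₂^2)) / x₃^2 := by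
    have e : (fun t => fC a₁ a₂ b c₁ c₂ t x₂ x₃) = (fun t =>
        (((1/4 : ℝ)*a₂^2 + (1/4 : ℝ)*a₁^2)*t^4 + (1*a₁*b)*t^3 + (1*b^2 + -1*a₂*c₂ + 1*a₂*b*x₂ + (1/2 : ℝ)*a₂^2*x₃^2 + (1/2 : ℝ)*a₂^2*x₂^2 + 1*a₁*c₁ + (1/2 : ℝ)*a₁^2*x₃^2 + (1/2 : ℝ)*a₁^2*x₂^2)*t^2 + (2*b*c₁ + 2*a₂*c₁*x₂ + 2*a₁*c₂*x₂ + 1*a₁*b*x₃^2 + 1*a₁*b*x₂^2)*t + (1*c₂^2 + 1*c₁^2 + 2*b*c₂*x₂ + 1*b^2*x₃^2 + 1*b^2*x₂^2 + -1*a₂*c₂*x₃^2 + 1*a₂*c₂*x₂^2 + 1*a₂*b*x₂*x₃^2 + 1*a₂*b*x₂^3 + (1/4 : ℝ)*a₂^2*x₃^4 + (1/2 : ℝ)*a₂^2*x₂^2*x₃^2 + (1/4 : ℝ)*a₂^2*x₂^4 + -1*a₁*c₁*x₃^2 + -1*a₁*c₁*x₂^2 + (1/4 : ℝ)*a₁^2*x₃^4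 + (1/2 : ℝ)*a₁^2*x₂^2*x₃^2 + (1/4 : ℝ)*a₁^2*x₂^4)) / x₃^2) := by
      funext t; simp only [fC,XX1,XX2,XX3]; ring
    rw [e, deriv_div_const, (hpoly _ _ _ _ _ _).deriv]
  have dfC2 : deriv (fun t => fC a₁ a₂ b c₁ c₂ x₁ t x₃) x₂ =
      (4*((1/4 : ℝ)*a₂^2 + (1/4 : ℝ)*a₁^2)*x₂^3 + 3*(1*a₂*b)*x₂^2 + 2*(1*b^2 + 1*a₂*c₂ + (1/2 : ℝ)*a₂^2*x₃^2 + (1/2 : ℝ)*a₂^2*x₁^2 + -1*a₁*c₁ + 1*a₁*b*x₁ + (1/2 : ℝ)*a₁^2*x₃^2 + (1/2 : ℝ)*a₁^2*x₁^2)*x₂ + (2*b*c₂ + 2*a₂*c₁*x₁ + 1*a₂*b*x₃^2 + 1*a₂*b*x₁^2 + 2*a₁*c₂*x₁)) / x₃^2 := by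
    have e : (fun t => fC a₁ a₂ b c₁ c₂ x₁ t x₃) = (fun t =>
        (((1/4 : ℝ)*a₂^2 + (1/4 : ℝ)*a₁^2)*t^4 + (1*a₂*b)*t^3 + (1*b^2 + 1*a₂*c₂ + (1/2 : ℝ)*a₂^2*x₃^2 + (1/2 : ℝ)*a₂^2*x₁^2 + -1*a₁*c₁ + 1*a₁*b*x₁ + (1/2 : ℝ)*a₁^2*x₃^2 + (1/2 : ℝ)*a₁^2*x₁^2)*t^2 + (2*b*c₂ + 2*a₂*c₁*x₁ + 1*a₂*b*x₃^2 + 1*a₂*b*x₁^2 + 2*a₁*c₂*x₁)*t + (1*c₂^2 + 1*c₁^2 + 2*b*c₁*x₁ + 1*b^2*x₃^2 + 1*b^2*x₁^2 + -1*a₂*c₂*x₃^2 + -1*a₂*c₂*x₁^2 + (1/4 : ℝ)*a₂^2*x₃^4 + (1/2 : ℝ)*a₂^2*x₁^2*x₃^2 + (1/4 : ℝ)*a₂^2*x₁^4 + -1*a₁*c₁*x₃^2 + 1*a₁*c₁*x₁^2 + 1*a₁*b*x₁*x₃^2 + 1*a₁*b*x₁^3 + (1/4 : ℝ)*a₁^2*x₃^4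 + (1/2 : ℝ)*a₁^2*x₁^2*x₃^2 + (1/4 : ℝ)*a₁^2*x₁^4)) / x₃^2) := by
      funext t; simp only [fC,XX1,XX2,XX3]; ring
    rw [e, deriv_div_const, (hpoly _ _ _ _ _ _).deriv]
  have dfC3 : deriv (fun t => fC a₁ a₂ b c₁ c₂ x₁ x₂ t) x₃ =
      ((4*((1/4 : ℝ)*a₂^2 + (1/4 : ℝ)*a₁^2)*x₃^3 + 3*(0 : ℝ)*x₃^2 + 2*(1*b^2 + -1*a₂*c₂ + 1*a₂*b*x₂ + (1/2 : ℝ)*a₂^2*x₂^2 + (1/2 : ℝ)*a₂^2*x₁^2 + -1*a₁*c₁ + 1*a₁*b*x₁ + (1/2 : ℝ)*a₁^2*x₂^2 + (1/2 : ℝ)*a₁^2*x₁^2)*x₃ + (0 : ℝ)) * x₃^2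
        - (((1/4 : ℝ)*a₂^2 + (1/4 : ℝ)*a₁^2)*x₃^4 + (0 : ℝ)*x₃^3 + (1*b^2 + -1*a₂*c₂ + 1*a₂*b*x₂ + (1/2 : ℝ)*a₂^2*x₂^2 + (1/2 : ℝ)*a₂^2*x₁^2 + -1*a₁*c₁ + 1*a₁*b*x₁ + (1/2 : ℝ)*a₁^2*x₂^2 + (1/2 : ℝ)*a₁^2*x₁^2)*x₃^2 + (0 : ℝ)*x₃ + (1*c₂^2 + 1*c₁^2 + 2*b*c₂*x₂ + 2*b*c₁*x₁ + 1*b^2*x₂^2 + 1*b^2*x₁^2 + 1*a₂*c₂*x₂^2 + -1*a₂*c₂*x₁^2 + 2*a₂*c₁*x₁*x₂ + 1*a₂*b*x₂^3 + 1*a₂*b*x₁^2*x₂ + (1/4 : ℝ)*a₂^2*x₂^4 + (1/2 : ℝ)*a₂^2*x₁^2*x₂^2 + (1/4 : ℝ)*a₂^2*x₁^4 + 2*a₁*c₂*x₁*x₂ + -1*a₁*c₁*x₂^2 + 1*a₁*c₁*x₁^2 + 1*a₁*b*x₁*x₂^2 + 1*a₁*b*x₁^3 + (1/4 : ℝ)*a₁^2*x₂^4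 + (1/2 : ℝ)*a₁^2*x₁^2*x₂^2 + (1/4 : ℝ)*a₁^2*x₁^4)) * (2*x₃)) / x₃^4 := by
    have e : (fun t => fC a₁ a₂ b c₁ c₂ x₁ x₂ t) = (fun t =>
        (((1/4 : ℝ)*a₂^2 + (1/4 : ℝ)*a₁^2)*t^4 + (0 : ℝ)*t^3 + (1*b^2 + -1*a₂*c₂ + 1*a₂*b*x₂ + (1/2 : ℝ)*a₂^2*x₂^2 + (1/2 : ℝ)*a₂^2*x₁^2 + -1*a₁*c₁ + 1*a₁*b*x₁ + (1/2 : ℝ)*a₁^2*x₂^2 + (1/2 : ℝ)*a₁^2*x₁^2)*t^2 + (0 : ℝ)*t + (1*c₂^2 + 1*c₁^2 + 2*b*c₂*x₂ + 2*b*c₁*x₁ + 1*b^2*x₂^2 + 1*b^2*x₁^2 + 1*a₂*c₂*x₂^2 + -1*a₂*c₂*x₁^2 + 2*a₂*c₁*x₁*x₂ + 1*a₂*b*x₂^3 + 1*a₂*b*x₁^2*x₂ + (1/4 : ℝ)*a₂^2*x₂^4 + (1/2 : ℝ)*a₂^2*x₁^2*x₂^2 + (1/4 : ℝ)*a₂^2*x₁^4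 + 2*a₁*c₂*x₁*x₂ + -1*a₁*c₁*x₂^2 + 1*a₁*c₁*x₁^2 + 1*a₁*b*x₁*x₂^2 + 1*a₁*b*x₁^3 + (1/4 : ℝ)*a₁^2*x₂^4 + (1/2 : ℝ)*a₁^2*x₁^2*x₂^2 + (1/4 : ℝ)*a₁^2*x₁^4)) / t^2) := by
      funext t; simp only [fC,XX1,XX2,XX3]; ring
    rw [e, HasDerivAt.deriv (f := fun t => _ / t^2) ((hpoly _ _ _ _ _ x₃).div (hasDerivAt_pow 2 x₃) (by positivity))]
    push_cast; ring
  have dA1 : deriv (fun t => ow2 a₁ a₂ b c₂ t x₂ x₃) x₁ =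
      (4*(0 : ℝ)*x₁^3 + 3*(0 : ℝ)*x₁^2 + 2*((-1/2 : ℝ)*a₂)*x₁ + (1*a₁*x₂)) / x₃^2 := by
    have e : (fun t => ow2 a₁ a₂ b c₂ t x₂ x₃) = (fun t =>
        ((0 : ℝ)*t^4 + (0 : ℝ)*t^3 + ((-1/2 : ℝ)*a₂)*t^2 + (1*a₁*x₂)*t + (1*c₂ + 1*b*x₂ + (-1/2 : ℝ)*a₂*x₃^2 + (1/2 : ℝ)*a₂*x₂^2)) / x₃^2) := by
      funext t; simp only [ow2,XX2]; ring
    rw [e, deriv_div_const, (hpoly _ _ _ _ _ _).deriv]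
  have dA2 : deriv (fun t => ow1 a₁ a₂ b c₁ x₁ t x₃) x₂ =
      (4*(0 : ℝ)*x₂^3 + 3*(0 : ℝ)*x₂^2 + 2*((-1/2 : ℝ)*a₁)*x₂ + (1*a₂*x₁)) / x₃^2 := by
    have e : (fun t => ow1 a₁ a₂ b c₁ x₁ t x₃) = (fun t =>
        ((0 : ℝ)*t^4 + (0 : ℝ)*t^3 + ((-1/2 : ℝ)*a₁)*t^2 + (1*a₂*x₁)*t + (1*c₁ + 1*b*x₁ + (-1/2 : ℝ)*a₁*x₃^2 + (1/2 : ℝ)*a₁*x₁^2)) / x₃^2) := by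
      funext t; simp only [ow1,XX1]; ring
    rw [e, deriv_div_const, (hpoly _ _ _ _ _ _).deriv]
  have dB1 : deriv (fun t => ow3 a₁ a₂ b t x₂ x₃) x₁ =
      (4*(0 : ℝ)*x₁^3 + 3*(0 : ℝ)*x₁^2 + 2*(0 : ℝ)*x₁ + (1*a₁*x₃)) / x₃^2 := by
    have e : (fun t => ow3 a₁ a₂ b t x₂ x₃) = (fun t =>
        ((0 : ℝ)*t^4 + (0 : ℝ)*t^3 + (0 : ℝ)*t^2 + (1*a₁*x₃)*t + (1*b*x₃ + 1*a₂*x₂*x₃)) / x₃^2) := by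
      funext t; simp only [ow3,XX3]; ring
    rw [e, deriv_div_const, (hpoly _ _ _ _ _ _).deriv]
  have dB3 : deriv (fun t => ow1 a₁ a₂ b c₁ x₁ x₂ t) x₃ =
      ((4*(0 : ℝ)*x₃^3 + 3*(0 : ℝ)*x₃^2 + 2*((-1/2 : ℝ)*a₁)*x₃ + (0 : ℝ)) * x₃^2
        - ((0 : ℝ)*x₃^4 + (0 : ℝ)*x₃^3 + ((-1/2 : ℝ)*a₁)*x₃^2 + (0 : ℝ)*x₃ + (1*c₁ + 1*b*x₁ + 1*a₂*x₁*x₂ + (-1/2 : ℝ)*a₁*x₂^2 + (1/2 : ℝ)*a₁*x₁^2)) * (2*x₃)) / x₃^4 := by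
    have e : (fun t => ow1 a₁ a₂ b c₁ x₁ x₂ t) = (fun t =>
        ((0 : ℝ)*t^4 + (0 : ℝ)*t^3 + ((-1/2 : ℝ)*a₁)*t^2 + (0 : ℝ)*t + (1*c₁ + 1*b*x₁ + 1*a₂*x₁*x₂ + (-1/2 : ℝ)*a₁*x₂^2 + (1/2 : ℝ)*a₁*x₁^2)) / t^2) := by
      funext t; simp only [ow1,XX1]; ring
    rw [e, HasDerivAt.deriv (f := fun t => _ / t^2) ((hpoly _ _ _ _ _ x₃).div (hasDerivAt_pow 2 x₃) (by positivity))]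
    push_cast; ring
  have dC2 : deriv (fun t => ow3 a₁ a₂ b x₁ t x₃) x₂ =
      (4*(0 : ℝ)*x₂^3 + 3*(0 : ℝ)*x₂^2 + 2*(0 : ℝ)*x₂ + (1*a₂*x₃)) / x₃^2 := by
    have e : (fun t => ow3 a₁ a₂ b x₁ t x₃) = (fun t =>
        ((0 : ℝ)*t^4 + (0 : ℝ)*t^3 + (0 : ℝ)*t^2 + (1*a₂*x₃)*t + (1*b*x₃ + 1*a₁*x₁*x₃)) / x₃^2) := by
      funext t; simp only [ow3,XX3]; ring
    rw [e, deriv_div_const, (hpoly _ _ _ _ _ _).deriv]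
  have dC3 : deriv (fun t => ow2 a₁ a₂ b c₂ x₁ x₂ t) x₃ =
      ((4*(0 : ℝ)*x₃^3 + 3*(0 : ℝ)*x₃^2 + 2*((-1/2 : ℝ)*a₂)*x₃ + (0 : ℝ)) * x₃^2
        - ((0 : ℝ)*x₃^4 + (0 : ℝ)*x₃^3 + ((-1/2 : ℝ)*a₂)*x₃^2 + (0 : ℝ)*x₃ + (1*c₂ + 1*b*x₂ + (1/2 : ℝ)*a₂*x₂^2 + (-1/2 : ℝ)*a₂*x₁^2 + 1*a₁*x₁*x₂)) * (2*x₃)) / x₃^4 := by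
    have e : (fun t => ow2 a₁ a₂ b c₂ x₁ x₂ t) = (fun t =>
        ((0 : ℝ)*t^4 + (0 : ℝ)*t^3 + ((-1/2 : ℝ)*a₂)*t^2 + (0 : ℝ)*t + (1*c₂ + 1*b*x₂ + (1/2 : ℝ)*a₂*x₂^2 + (-1/2 : ℝ)*a₂*x₁^2 + 1*a₁*x₁*x₂)) / t^2) := by
      funext t; simp only [ow2,XX2]; ring
    rw [e, HasDerivAt.deriv (f := fun t => _ / t^2) ((hpoly _ _ _ _ _ x₃).div (hasDerivAt_pow 2 x₃) (by positivity))]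
    push_cast; ring
  have hx : x₃ ≠ 0 := ne_of_gt h
  refine ⟨?_, ?_, ?_⟩ <;>
    simp only [Aco, Bco, Cco, dfC1, dfC2, dfC3, dA1, dA2, dB1, dB3, dC2, dC3,
      XX1, XX2, XX3] <;>
    field_simp <;> ring
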